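/- Assume the circuit sign constraints sign ξ₁ = sign ξ₂ = −sign(L₁L₂) = σ with σ ∈ {+1,−1}, and let g be a real number with g₋₁ ≤ g ≤ g₁, where g_δ = (√|ξ₁| + δ√|ξ₂|)²·|L₁L₂| for δ = ±1. Then every complex root s of χ(s) = s⁴ + (ξ₁ + ξ₂ + g/(L₁L₂))s² + ξ₁ξ₂ satisfies |s| = (|ξ₁|·|ξ₂|)^{1/4}. -/

import Mathlib

lemma pos_of_sign_eq_one {x : ℝ} (h : Real.sign x = 1) : 0 < x := by
  rcases lt_trichotomy 0 x with h' | h' | h'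
  · exact h'
  · rw [← h', Real.sign_zero] at h; norm_num at h
  · rw [Real.sign_of_neg h'] at h; norm_num at h

lemma neg_of_sign_eq_neg_one {x : ℝ} (h : Real.sign x = -1) : x < 0 := by
  rcases lt_trichotomy x 0 with h' | h' | h'
  · exact h'
  · rw [h', Real.sign_zero] at h; norm_num at h
  · rw [Real.sign_of_pos h'] at h; norm_num at h

/-- If `z² + bz + c = 0` with real `b, c` and `b² ≤ 4c`, then `|z|² = c`. -/
lemma normSq_of_quad (b c : ℝ) (hb : b ^ 2 ≤ 4 * c) (z : ℂ)
    (hz : z ^ 2 + (b : ℂ) * z + (c : ℂ) = 0) : Complex.normSq z = c := by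
  have hr : 0 ≤ c - b ^ 2 / 4 := by linarith
  have hr2 : Real.sqrt (c - b ^ 2 / 4) ^ 2 = c - b ^ 2 / 4 := Real.sq_sqrt hr
  set r := Real.sqrt (c - b ^ 2 / 4)
  have hrc : (r : ℂ) ^ 2 = (c : ℂ) - (b : ℂ) ^ 2 / 4 := by exact_mod_cast hr2
  have hI : (Complex.I) ^ 2 = -1 := Complex.I_sq
  have hfac : (z + (b : ℂ) / 2 - Complex.I * r) * (z + (b : ℂ) / 2 + Complex.I * r) = 0 := by
    linear_combination hz + hrc + (-(r : ℂ) ^ 2) * hI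
  have key : ∀ t : ℝ, z = (-(b / 2) : ℝ) + (t : ℝ) * Complex.I →
      t ^ 2 = c - b ^ 2 / 4 → Complex.normSq z = c := by
    intro t hzt ht
    rw [hzt, Complex.normSq_add_mul_I]
    nlinarith [ht]
  rcases mul_eq_zero.mp hfac with h | h
  · refine key r ?_ hr2
    have : z = Complex.I * r - (b : ℂ) / 2 := by linear_combination h
    rw [this]; push_cast; ring
  · refine key (-r) ?_ (by nlinarith)
    have : z = -(Complex.I * r) - (b : ℂ) / 2 := by linear_combination h
    rw [this]; push_cast; ring

/-- Under the circuit sign constraints, if `g₋₁ ≤ g ≤ g₁` then every complex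
root `s` of `χ(s) = s⁴ + (ξ₁ + ξ₂ + g/(L₁L₂))s² + ξ₁ξ₂` satisfies
`|s| = (|ξ₁||ξ₂|)^(1/4)`. -/
theorem roots_on_circle (L₁ C₁ L₂ C₂ : ℝ)
    (hL₁ : L₁ ≠ 0) (hC₁ : C₁ ≠ 0) (hL₂ : L₂ ≠ 0) (hC₂ : C₂ ≠ 0)
    (ξ₁ ξ₂ : ℝ) (hξ₁ : ξ₁ = 1 / (L₁ * C₁)) (hξ₂ : ξ₂ = 1 / (L₂ * C₂))
    (σ : ℝ) (hσ : σ = 1 ∨ σ = -1)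
    (hs₁ : Real.sign ξ₁ = σ) (hs₂ : Real.sign ξ₂ = σ) (hsL : Real.sign (L₁ * L₂) = -σ)
    (g : ℝ)
    (hlo : (Real.sqrt |ξ₁| + (-1) * Real.sqrt |ξ₂|) ^ 2 * |L₁ * L₂| ≤ g)
    (hhi : g ≤ (Real.sqrt |ξ₁| + 1 * Real.sqrt |ξ₂|) ^ 2 * |L₁ * L₂|)
    (s : ℂ)
    (hroot : s ^ 4 + ((ξ₁ : ℂ) + (ξ₂ : ℂ) + (g : ℂ) / ((L₁ : ℂ) * (L₂ : ℂ))) * s ^ 2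
        + (ξ₁ : ℂ) * (ξ₂ : ℂ) = 0) :
    ‖s‖ = (|ξ₁| * |ξ₂|) ^ ((1 : ℝ) / 4) := by
  have hPne : L₁ * L₂ ≠ 0 := mul_ne_zero hL₁ hL₂
  -- turn the root equation into a quadratic in s² with real coefficients
  have htC : ((ξ₁ : ℂ) + (ξ₂ : ℂ) + (g : ℂ) / ((L₁ : ℂ) * (L₂ : ℂ)))
      = ((ξ₁ + ξ₂ + g / (L₁ * L₂) : ℝ) : ℂ) := by push_cast; ring
  have hz : (s ^ 2) ^ 2 + ((ξ₁ + ξ₂ + g / (L₁ * L₂) : ℝ) : ℂ) * s ^ 2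
      + ((ξ₁ * ξ₂ : ℝ) : ℂ) = 0 := by
    rw [← htC]; push_cast; linear_combination hroot
  have hgt : g / (L₁ * L₂) * (L₁ * L₂) = g := div_mul_cancel₀ g hPne
  set t := g / (L₁ * L₂) with htdef
  set P := L₁ * L₂ with hPdef
  set a := Real.sqrt |ξ₁| with hadef
  set b' := Real.sqrt |ξ₂| with hbdef
  have ha2 : a ^ 2 = |ξ₁| := Real.sq_sqrt (abs_nonneg _)
  have hb2 : b' ^ 2 = |ξ₂| := Real.sq_sqrt (abs_nonneg _)
  have ha0 : 0 ≤ a := Real.sqrt_nonneg _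
  have hb0 : 0 ≤ b' := Real.sqrt_nonneg _
  clear_value t P a b'
  clear hroot htC htdef hPdef hadef hbdef hξ₁ hξ₂
  have hkey : (ξ₁ + ξ₂ + t) ^ 2 ≤ 4 * (ξ₁ * ξ₂) ∧ ξ₁ * ξ₂ = |ξ₁| * |ξ₂| := by
    rcases hσ with h1 | h1
    · have hx1 : 0 < ξ₁ := pos_of_sign_eq_one (by rw [hs₁, h1])
      have hx2 : 0 < ξ₂ := pos_of_sign_eq_one (by rw [hs₂, h1])
      have hPneg : P < 0 := neg_of_sign_eq_neg_one (by rw [hsL, h1])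
      have habs1 : |ξ₁| = ξ₁ := abs_of_pos hx1
      have habs2 : |ξ₂| = ξ₂ := abs_of_pos hx2
      have habsP : |P| = -P := abs_of_neg hPneg
      rw [habsP, ← hgt] at hlo hhi
      have hhiT : -(a + b') ^ 2 ≤ t := by nlinarith [hhi, hPneg, mul_nonneg (sq_nonneg (a + b')) (neg_nonneg.mpr hPneg.le)]
      have hloT : t ≤ -(a - b') ^ 2 := by nlinarith [hlo, hPneg]
      refine ⟨?_, by rw [habs1, habs2]⟩
      nlinarith [mul_nonneg ha0 hb0, sq_nonneg (a * b'), sq_nonneg (a - b'), sq_nonneg (a + b')]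
    · have hx1 : ξ₁ < 0 := neg_of_sign_eq_neg_one (by rw [hs₁, h1])
      have hx2 : ξ₂ < 0 := neg_of_sign_eq_neg_one (by rw [hs₂, h1])
      have hPpos : 0 < P := pos_of_sign_eq_one (by rw [hsL, h1]; norm_num)
      have habs1 : |ξ₁| = -ξ₁ := abs_of_neg hx1
      have habs2 : |ξ₂| = -ξ₂ := abs_of_neg hx2
      have habsP : |P| = P := abs_of_pos hPpos
      rw [habsP, ← hgt] at hlo hhi
      have hloT : (a - b') ^ 2 ≤ t := by
        have := (mul_le_mul_iff_of_pos_right hPpos).mp hlo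
        nlinarith [this]
      have hhiT : t ≤ (a + b') ^ 2 := by
        have := (mul_le_mul_iff_of_pos_right hPpos).mp hhi
        nlinarith [this]
      refine ⟨?_, by rw [habs1, habs2]; ring⟩
      nlinarith [mul_nonneg ha0 hb0, sq_nonneg (a * b'), sq_nonneg (a - b'), sq_nonneg (a + b')]
  obtain ⟨hb4c, hprod⟩ := hkey
  have hns : Complex.normSq (s ^ 2) = ξ₁ * ξ₂ := normSq_of_quad _ _ hb4c _ hz
  have habs4 : ‖s‖ ^ 4 = |ξ₁| * |ξ₂| := by
    have h' : Complex.normSq (s ^ 2) = ‖s‖ ^ 4 := by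
      rw [Complex.normSq_eq_norm_sq, norm_pow]; ring
    rw [← hprod, ← hns, h']
  have hpos : 0 ≤ ‖s‖ := norm_nonneg s
  rw [← habs4, ← Real.rpow_natCast ‖s‖ 4, ← Real.rpow_mul hpos]
  norm_num
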